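/- Let k be a positive integer, p = (p_0,...,p_k) a probability vector with all p_i > 0, and f: {0,...,k} -> {0,1} any function. Define w_{l,p}(f) = P[ f(beta_p(U)) != f(beta_p(h_l(U))) ] where U is uniform on (0,1), beta_p is the quantile map into {0,...,k}, and h_l flips the l-th binary digit; and set w_p(f) = sum_{l=1}^infinity w_{l,p}(f). Then w_p(f) <= 3 k^2 p_max(p) log(4/p_max(p)), where p_max(p) is the second largest of p_0,...,p_k. -/

import Mathlib

open MeasureTheory

/-- The map inverting the `l`-th binary digit of `x ∈ [0,1)` (using the terminating
expansion where there is a choice). -/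
noncomputable def flipDigit (l : ℕ) (x : ℝ) : ℝ :=
  if ⌊x * 2 ^ l⌋ % 2 = 0 then x + (2 : ℝ) ^ (-(l : ℤ)) else x - (2 : ℝ) ^ (-(l : ℤ))

namespace SumDigitAux

lemma c_pos (m : ℕ) : (0:ℝ) < (2:ℝ) ^ (-(m:ℤ)) := zpow_pos (by norm_num) _

lemma c_mul (m : ℕ) : (2:ℝ) ^ (-(m:ℤ)) * 2 ^ m = 1 := by
  rw [zpow_neg, zpow_natCast]; field_simp

lemma floor_add_c (m : ℕ) (x : ℝ) :
    ⌊(x + (2:ℝ) ^ (-(m:ℤ))) * 2 ^ m⌋ = ⌊x * 2 ^ m⌋ + 1 := by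
  have h : (x + (2:ℝ) ^ (-(m:ℤ))) * 2 ^ m = x * 2 ^ m + 1 := by
    rw [add_mul, c_mul]
  rw [h]
  exact_mod_cast Int.floor_add_one _

lemma mem_E0_iff (m : ℕ) (x : ℝ) :
    ⌊x * 2 ^ m⌋ % 2 = 0 ↔ ¬ (⌊(x + (2:ℝ) ^ (-(m:ℤ))) * 2 ^ m⌋ % 2 = 0) := by
  rw [floor_add_c]; omega

lemma flip_preimage_le (m : ℕ) (A : Set ℝ) (hA : MeasurableSet A) :
    volume (flipDigit m ⁻¹' A) ≤ volume A := by
  set c : ℝ := (2:ℝ) ^ (-(m:ℤ)) with hc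
  set E : Set ℝ := {x | ⌊x * 2 ^ m⌋ % 2 = 0} with hE
  have hEm : MeasurableSet E := by
    have hm : Measurable fun x : ℝ => ⌊x * 2 ^ m⌋ :=
      Int.measurable_floor.comp (measurable_id.mul_const _)
    exact hm (MeasurableSet.of_discrete (s := {n : ℤ | n % 2 = 0}))
  have h1 : flipDigit m ⁻¹' A ∩ E ⊆ (· + c) ⁻¹' (A \ E) := by
    intro x hx
    have hxE : ⌊x * 2 ^ m⌋ % 2 = 0 := hx.2
    have hflip : flipDigit m x = x + c := by rw [flipDigit, if_pos hxE]
    refine ⟨?_, (mem_E0_iff m x).mp hxE⟩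
    have := hx.1; rwa [Set.mem_preimage, hflip] at this
  have h2 : flipDigit m ⁻¹' A \ E ⊆ (· - c) ⁻¹' (A ∩ E) := by
    intro x hx
    have hxE : ¬ ⌊x * 2 ^ m⌋ % 2 = 0 := hx.2
    have hflip : flipDigit m x = x - c := by rw [flipDigit, if_neg hxE]
    have hAx : x - c ∈ A := by
      have := hx.1; rwa [Set.mem_preimage, hflip] at this
    refine ⟨hAx, (mem_E0_iff m (x - c)).mpr ?_⟩
    rwa [sub_add_cancel]
  calc volume (flipDigit m ⁻¹' A)
      ≤ volume (flipDigit m ⁻¹' A ∩ E) + volume (flipDigit m ⁻¹' A \ E) :=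
        measure_le_inter_add_diff _ _ _
    _ ≤ volume ((· + c) ⁻¹' (A \ E)) + volume ((· - c) ⁻¹' (A ∩ E)) :=
        add_le_add (measure_mono h1) (measure_mono h2)
    _ = volume (A \ E) + volume (A ∩ E) := by
        simp only [sub_eq_add_neg]
        rw [measure_preimage_add_right, measure_preimage_add_right]
    _ = volume A := by rw [add_comm, measure_inter_add_diff _ hEm]

lemma flip_mem_Ico (m : ℕ) (hm : 0 < m) (x : ℝ) (hx : x ∈ Set.Ico (0:ℝ) 1) :
    flipDigit m x ∈ Set.Ico (0:ℝ) 1 := by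
  obtain ⟨hx0, hx1⟩ := hx
  have h2m : (0:ℝ) < 2 ^ m := by positivity
  have hfl0 : (0:ℤ) ≤ ⌊x * 2 ^ m⌋ := Int.floor_nonneg.mpr (by positivity)
  have hflub : ⌊x * 2 ^ m⌋ < 2 ^ m := by
    apply Int.floor_lt.mpr
    push_cast
    nlinarith
  have hcm := c_mul m
  have hcpos := c_pos m
  rw [flipDigit]
  split_ifs with h
  · constructor
    · have : (0:ℝ) ≤ x := hx0
      linarith
    · -- x + c < 1 since ⌊x 2^m⌋ ≤ 2^m - 2
      have hle : ⌊x * 2 ^ m⌋ ≤ 2 ^ m - 2 := by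
        have h2 : (2:ℤ) ∣ 2 ^ m := dvd_pow_self 2 hm.ne'
        omega
      have hxlt : x * 2 ^ m < ⌊x * 2 ^ m⌋ + 1 := Int.lt_floor_add_one _
      have : x * 2 ^ m < 2 ^ m - 1 := by
        have : ((⌊x * 2 ^ m⌋ : ℝ)) ≤ (2:ℝ) ^ m - 2 := by exact_mod_cast hle
        push_cast at hxlt ⊢
        linarith
      nlinarith [c_pos m, c_mul m]
  · constructor
    · have h1le : (1:ℤ) ≤ ⌊x * 2 ^ m⌋ := by omega
      have : (1:ℝ) ≤ x * 2 ^ m := by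
        have := Int.floor_le (x * 2 ^ m)
        have h1r : ((1:ℤ):ℝ) ≤ ((⌊x * 2 ^ m⌋ : ℤ) : ℝ) := by exact_mod_cast h1le
        push_cast at h1r; linarith
      nlinarith
    · linarith


lemma flip_eq_add (m : ℕ) (x : ℝ) (h : ⌊x * 2 ^ m⌋ % 2 = 0) :
    flipDigit m x = x + (2:ℝ) ^ (-(m:ℤ)) := by rw [flipDigit, if_pos h]

lemma flip_eq_sub (m : ℕ) (x : ℝ) (h : ¬ ⌊x * 2 ^ m⌋ % 2 = 0) :
    flipDigit m x = x - (2:ℝ) ^ (-(m:ℤ)) := by rw [flipDigit, if_neg h]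

end SumDigitAux

open SumDigitAux Set

set_option maxHeartbeats 2000000

/-- Lemma `KeyBoundUnlim`: For a probability vector `p` on `{0,…,k}`
with positive entries and any `f : {0,…,k} → {0,1}`, with
`w_{l,p}(f) = P[f(β_p(U)) ≠ f(β_p(h_l(U)))]` (`U` uniform on `(0,1)`, `β_p` the
quantile map, `h_l` the `l`-th-binary-digit flip),
`∑_{l=1}^∞ w_{l,p}(f) ≤ 3 k² pmax log(4/pmax)`, where `pmax` is the second largest
entry of `p`. -/
theorem sum_digit_influence_le (k : ℕ) (hk : 0 < k)
    (p : Fin (k + 1) → ℝ) (hpos : ∀ i, 0 < p i) (hsum : ∑ i, p i = 1)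
    (β : ℝ → Fin (k + 1))
    (hβ : ∀ x ∈ Set.Ico (0 : ℝ) 1,
      (∑ i ∈ Finset.univ.filter (· < β x), p i) ≤ x ∧
      ∀ j : Fin (k + 1), (∑ i ∈ Finset.univ.filter (· < j), p i) ≤ x → j ≤ β x)
    (s : Fin (k + 1)) (hs : ∀ i, p i ≤ p s)
    (pmax : ℝ) (hub : ∀ i, i ≠ s → p i ≤ pmax) (hex : ∃ i, i ≠ s ∧ p i = pmax)
    (f : Fin (k + 1) → Bool) :
    (∑' l : ℕ, volume {x | x ∈ Set.Ioo (0 : ℝ) 1 ∧ f (β x) ≠ f (β (flipDigit (l + 1) x))}) ≤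
      ENNReal.ofReal (3 * k ^ 2 * pmax * Real.log (4 / pmax)) := by
  classical
  set C : Fin (k+1) → ℝ := fun j => ∑ i ∈ Finset.univ.filter (· < j), p i with hC
  -- basic facts about C
  have hC0 : ∀ j, 0 ≤ C j := fun j =>
    Finset.sum_nonneg fun i _ => (hpos i).le
  have hCp : ∀ j : Fin (k+1), C j + p j = ∑ i ∈ Finset.univ.filter (· ≤ j), p i := by
    intro j
    have hins : Finset.univ.filter (· ≤ j) = insert j (Finset.univ.filter (· < j)) := by
      ext i
      simp only [Finset.mem_filter, Finset.mem_univ, true_and, Finset.mem_insert]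
      constructor
      · intro h; rcases lt_or_eq_of_le h with h | h
        · exact Or.inr h
        · exact Or.inl h
      · rintro (rfl | h)
        · exact le_refl _
        · exact h.le
    rw [hins, Finset.sum_insert (by simp)]
    ring
  have hCp1 : ∀ j, C j + p j ≤ 1 := by
    intro j
    rw [hCp, ← hsum]
    exact Finset.sum_le_sum_of_subset_of_nonneg (Finset.filter_subset _ _)
      (fun i _ _ => (hpos i).le)
  have hCmono : ∀ i j : Fin (k+1), i < j → C i + p i ≤ C j := by
    intro i j hij
    rw [hCp]
    apply Finset.sum_le_sum_of_subset_of_nonneg ?_ (fun i _ _ => (hpos i).le)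
    intro m hm
    simp only [Finset.mem_filter, Finset.mem_univ, true_and] at hm ⊢
    exact lt_of_le_of_lt hm hij
  -- characterization of β
  have hβlb : ∀ x ∈ Set.Ico (0:ℝ) 1, C (β x) ≤ x := fun x hx => (hβ x hx).1
  have hβub : ∀ x ∈ Set.Ico (0:ℝ) 1, x < C (β x) + p (β x) := by
    intro x hx
    by_contra h
    push_neg at h
    have hlast : β x ≠ Fin.last k := by
      intro he
      have hflt : Finset.univ.filter (· ≤ Fin.last k) = Finset.univ := by
        ext i; simp [Fin.le_last]
      have h1' : C (β x) + p (β x) = 1 := by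
        rw [hCp, he, hflt, ← hsum]
      rw [h1'] at h
      exact absurd hx.2 (not_lt.mpr h)
    have hvlt : (β x).val < k := by
      rcases lt_or_eq_of_le (Nat.lt_succ_iff.mp (β x).isLt) with h' | h'
      · exact h'
      · exact absurd (Fin.ext h' : β x = Fin.last k) hlast
    set j : Fin (k+1) := ⟨(β x).val + 1, by omega⟩ with hj
    have hset : Finset.univ.filter (· < j) = Finset.univ.filter (· ≤ β x) := by
      ext i
      simp only [Finset.mem_filter, Finset.mem_univ, true_and]
      rw [Fin.lt_def, Fin.le_def]
      simp only [hj]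
      omega
    have hCj : C j ≤ C (β x) + p (β x) := by
      apply le_of_eq
      rw [hCp]
      show ∑ i ∈ Finset.univ.filter (· < j), p i = _
      rw [hset]
    have : j ≤ β x := (hβ x hx).2 j (le_trans hCj h)
    rw [Fin.le_def] at this
    simp [hj] at this
  have hβeq : ∀ x ∈ Set.Ico (0:ℝ) 1, ∀ j : Fin (k+1),
      C j ≤ x → x < C j + p j → β x = j := by
    intro x hx j h1 h2
    have hle : j ≤ β x := (hβ x hx).2 j h1
    rcases lt_or_eq_of_le hle with h | h
    · exfalso
      have := hCmono j (β x) h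
      have := hβlb x hx
      linarith
    · exact h.symm
  have hβmono : ∀ x ∈ Set.Ico (0:ℝ) 1, ∀ y ∈ Set.Ico (0:ℝ) 1, x ≤ y → β x ≤ β y := by
    intro x hx y hy hxy
    exact (hβ y hy).2 _ (le_trans (hβlb x hx) hxy)
  -- pmax facts
  have hpm_pos : 0 < pmax := by
    obtain ⟨i, _, hi⟩ := hex
    exact hi ▸ hpos i
  have hpm_le_ps : pmax ≤ p s := by
    obtain ⟨i, _, hi⟩ := hex
    exact hi ▸ hs i
  have hpm_half : pmax ≤ 1/2 := by
    obtain ⟨i, hi, hieq⟩ := hex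
    have : p i + p s ≤ 1 := by
      rw [← hsum]
      have : ({i, s} : Finset (Fin (k+1))) ⊆ Finset.univ := Finset.subset_univ _
      calc p i + p s = ∑ m ∈ ({i, s} : Finset (Fin (k+1))), p m := by
            rw [Finset.sum_insert (by simp [hi]), Finset.sum_singleton]
        _ ≤ ∑ m, p m := Finset.sum_le_sum_of_subset_of_nonneg this
            (fun m _ _ => (hpos m).le)
    linarith [hpm_le_ps, hieq ▸ le_refl (p i)]
  have hone : 1 - p s ≤ k * pmax := by
    have he : ∑ i ∈ Finset.univ.erase s, p i = 1 - p s := by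
      rw [← hsum]
      exact Finset.sum_erase_eq_sub (Finset.mem_univ s)
    have hle : ∑ i ∈ Finset.univ.erase s, p i ≤ ∑ i ∈ Finset.univ.erase s, pmax :=
      Finset.sum_le_sum fun i hi => hub i (Finset.ne_of_mem_erase hi)
    rw [Finset.sum_const, Finset.card_erase_of_mem (Finset.mem_univ s),
      Finset.card_univ, Fintype.card_fin] at hle
    simp only [Nat.add_sub_cancel, nsmul_eq_mul] at hle
    linarith [he ▸ hle]
  -- the bad sets
  set bad : ℕ → Set ℝ := fun l =>
    {x | x ∈ Set.Ioo (0 : ℝ) 1 ∧ f (β x) ≠ f (β (flipDigit (l + 1) x))} with hbad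
  have hkpm : (0:ℝ) ≤ (k:ℝ) * pmax := mul_nonneg (Nat.cast_nonneg k) hpm_pos.le
  -- Bound 1
  have bound1 : ∀ l : ℕ, volume (bad l) ≤ ENNReal.ofReal (2 * (k * pmax)) := by
    intro l
    set A : Set ℝ := Set.Ico (0:ℝ) 1 \ Set.Ico (C s) (C s + p s) with hA
    have hAm : MeasurableSet A := measurableSet_Ico.diff measurableSet_Ico
    have hsub : bad l ⊆ A ∪ flipDigit (l+1) ⁻¹' A := by
      intro x hx
      obtain ⟨hxI, hfne⟩ := hx
      have hxIco : x ∈ Set.Ico (0:ℝ) 1 := ⟨hxI.1.le, hxI.2⟩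
      have hyIco : flipDigit (l+1) x ∈ Set.Ico (0:ℝ) 1 :=
        flip_mem_Ico _ (Nat.succ_pos l) x hxIco
      by_cases hβx : β x = s
      · right
        have hβy : β (flipDigit (l+1) x) ≠ s := fun h => hfne (by rw [hβx, h])
        exact ⟨hyIco, fun hmem => hβy (hβeq _ hyIco s hmem.1 hmem.2)⟩
      · left
        exact ⟨hxIco, fun hmem => hβx (hβeq _ hxIco s hmem.1 hmem.2)⟩
    have hvolA : volume A ≤ ENNReal.ofReal (k * pmax) := by
      have hsubA : A ⊆ Set.Ico (0:ℝ) (C s) ∪ Set.Ico (C s + p s) 1 := by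
        rintro x ⟨⟨hx0, hx1⟩, hxn⟩
        by_cases h : x < C s
        · exact Or.inl ⟨hx0, h⟩
        · push_neg at h
          refine Or.inr ⟨?_, hx1⟩
          by_contra hlt
          push_neg at hlt
          exact hxn ⟨h, hlt⟩
      calc volume A ≤ volume (Set.Ico (0:ℝ) (C s)) + volume (Set.Ico (C s + p s) 1) :=
            le_trans (measure_mono hsubA) (measure_union_le _ _)
        _ = ENNReal.ofReal (C s - 0) + ENNReal.ofReal (1 - (C s + p s)) := by
            rw [Real.volume_Ico, Real.volume_Ico]
        _ = ENNReal.ofReal (1 - p s) := by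
            rw [← ENNReal.ofReal_add (by linarith [hC0 s]) (by linarith [hCp1 s])]
            congr 1; ring
        _ ≤ ENNReal.ofReal (k * pmax) := ENNReal.ofReal_le_ofReal hone
    calc volume (bad l) ≤ volume (A ∪ flipDigit (l+1) ⁻¹' A) := measure_mono hsub
      _ ≤ volume A + volume (flipDigit (l+1) ⁻¹' A) := measure_union_le _ _
      _ ≤ volume A + volume A := add_le_add le_rfl (flip_preimage_le _ _ hAm)
      _ ≤ ENNReal.ofReal (k*pmax) + ENNReal.ofReal (k*pmax) := add_le_add hvolA hvolA
      _ = ENNReal.ofReal (2*(k*pmax)) := by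
          rw [← ENNReal.ofReal_add hkpm hkpm]; congr 1; ring
  -- Bound 2
  have bound2 : ∀ l : ℕ, volume (bad l) ≤
      ENNReal.ofReal (2 * k * (2:ℝ) ^ (-((l:ℤ) + 1))) := by
    intro l
    set m : ℕ := l + 1 with hm
    set c : ℝ := (2:ℝ) ^ (-(m:ℤ)) with hc
    have hcpos : 0 < c := c_pos m
    have hexp : -((l:ℤ)+1) = -(m:ℤ) := by rw [hm]; push_cast; ring
    have hsub : bad l ⊆
        ⋃ j ∈ Finset.univ.erase (0 : Fin (k+1)), Set.Icc (C j - c) (C j + c) := by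
      intro x hx
      obtain ⟨hxI, hfne⟩ := hx
      have hxIco : x ∈ Set.Ico (0:ℝ) 1 := ⟨hxI.1.le, hxI.2⟩
      set y := flipDigit m x with hy
      have hyIco : y ∈ Set.Ico (0:ℝ) 1 := flip_mem_Ico _ (Nat.succ_pos l) x hxIco
      have hβne : β x ≠ β y := fun h => hfne (by rw [hy] at h; rw [h])
      by_cases hpar : ⌊x * 2 ^ m⌋ % 2 = 0
      · have hyx : y = x + c := flip_eq_add m x hpar
        have hlt : β x < β y :=
          lt_of_le_of_ne (hβmono x hxIco y hyIco (by rw [hyx]; linarith)) hβne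
        have hj : β y ∈ (Finset.univ.erase (0 : Fin (k+1)) : Set (Fin (k+1))) := by
          simp only [Finset.coe_erase, Set.mem_diff, Set.mem_singleton_iff]
          refine ⟨by simp, ?_⟩
          exact (Fin.pos_iff_ne_zero.mp (lt_of_le_of_lt (Fin.zero_le _) hlt))
        apply Set.mem_biUnion hj
        have h1 : C (β y) ≤ x + c := by
          have h := hβlb y hyIco; linarith [hyx.le, hyx.ge]
        have hxlt : x < C (β y) := by
          by_contra hcon
          push_neg at hcon
          exact absurd ((hβ x hxIco).2 _ hcon) (not_le.mpr hlt)
        exact ⟨by linarith, by linarith⟩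
      · have hyx : y = x - c := flip_eq_sub m x hpar
        have hlt : β y < β x :=
          lt_of_le_of_ne (hβmono y hyIco x hxIco (by rw [hyx]; linarith)) (Ne.symm hβne)
        have hj : β x ∈ (Finset.univ.erase (0 : Fin (k+1)) : Set (Fin (k+1))) := by
          simp only [Finset.coe_erase, Set.mem_diff, Set.mem_singleton_iff]
          refine ⟨by simp, ?_⟩
          exact (Fin.pos_iff_ne_zero.mp (lt_of_le_of_lt (Fin.zero_le _) hlt))
        apply Set.mem_biUnion hj
        have h1 : C (β x) ≤ x := hβlb x hxIco
        have h2 : y < C (β x) := by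
          by_contra hcon
          push_neg at hcon
          exact absurd ((hβ y hyIco).2 _ hcon) (not_le.mpr hlt)
        exact ⟨by linarith [hyx.le, hyx.ge], by linarith [hyx.le, hyx.ge]⟩
    calc volume (bad l)
        ≤ ∑ j ∈ Finset.univ.erase (0 : Fin (k+1)), volume (Set.Icc (C j - c) (C j + c)) :=
          le_trans (measure_mono hsub) (measure_biUnion_finset_le _ _)
      _ = ∑ j ∈ Finset.univ.erase (0 : Fin (k+1)), ENNReal.ofReal (2*c) := by
          refine Finset.sum_congr rfl fun j _ => ?_
          rw [Real.volume_Icc]; congr 1; ring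
      _ = k • ENNReal.ofReal (2*c) := by
          rw [Finset.sum_const, Finset.card_erase_of_mem (Finset.mem_univ _),
            Finset.card_univ, Fintype.card_fin, Nat.add_sub_cancel]
      _ = ENNReal.ofReal (2 * k * (2:ℝ) ^ (-((l:ℤ) + 1))) := by
          rw [hexp, nsmul_eq_mul, ← ENNReal.ofReal_natCast k,
            ← ENNReal.ofReal_mul (Nat.cast_nonneg k)]
          congr 1; rw [hc]; ring
  -- choose L
  set L : ℕ := ⌈Real.logb 2 (1/pmax)⌉₊ with hL
  have h2L : (2:ℝ) ^ (-(L:ℤ)) ≤ pmax := by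
    have h1 : 1/pmax ≤ (2:ℝ) ^ (L:ℝ) := by
      rw [← Real.rpow_logb (b := 2) (x := 1/pmax) (by norm_num) (by norm_num) (by positivity)]
      exact Real.rpow_le_rpow_of_exponent_le (by norm_num) (Nat.le_ceil _)
    rw [Real.rpow_natCast] at h1
    have h2Lpos : (0:ℝ) < 2 ^ (L:ℕ) := by positivity
    rw [zpow_neg, zpow_natCast, ← one_div, div_le_iff₀ h2Lpos]
    rw [div_le_iff₀ hpm_pos] at h1
    nlinarith
  -- tail bound
  have tail : (∑' l : ℕ, volume (bad (l + L))) ≤ ENNReal.ofReal (2 * (k * pmax)) := by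
    have hterm : ∀ l : ℕ, volume (bad (l + L)) ≤
        ENNReal.ofReal ((2 * k * (2:ℝ) ^ (-(L:ℤ) - 1)) * (1/2) ^ l) := by
      intro l
      refine (bound2 (l + L)).trans (le_of_eq ?_)
      congr 1
      have e1 : ((1:ℝ)/2) ^ l = (2:ℝ) ^ (-(l:ℤ)) := by
        rw [zpow_neg, zpow_natCast, one_div, inv_pow]
      rw [e1, show -(((l + L : ℕ):ℤ) + 1) = (-(L:ℤ) - 1) + (-(l:ℤ)) by push_cast; ring,
        zpow_add₀ (two_ne_zero : (2:ℝ) ≠ 0)]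
      ring
    calc (∑' l : ℕ, volume (bad (l + L)))
        ≤ ∑' l : ℕ, ENNReal.ofReal ((2 * k * (2:ℝ) ^ (-(L:ℤ) - 1)) * (1/2) ^ l) :=
          ENNReal.tsum_le_tsum hterm
      _ = ENNReal.ofReal (∑' l : ℕ, (2 * k * (2:ℝ) ^ (-(L:ℤ) - 1)) * (1/2) ^ l) := by
          rw [ENNReal.ofReal_tsum_of_nonneg]
          · intro n
            have : (0:ℝ) < (2:ℝ) ^ (-(L:ℤ) - 1) := by positivity
            positivity
          · exact (summable_geometric_of_lt_one (by norm_num) (by norm_num)).mul_left _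
      _ = ENNReal.ofReal ((2 * k * (2:ℝ) ^ (-(L:ℤ) - 1)) * 2) := by
          rw [tsum_mul_left, tsum_geometric_two]
      _ ≤ ENNReal.ofReal (2 * (k * pmax)) := by
          apply ENNReal.ofReal_le_ofReal
          have e2 : (2:ℝ) ^ (-(L:ℤ) - 1) * 2 = (2:ℝ) ^ (-(L:ℤ)) := by
            rw [show (-(L:ℤ) - 1) = -(L:ℤ) + (-1) by ring,
              zpow_add₀ (two_ne_zero : (2:ℝ) ≠ 0)]
            norm_num
            ring
          calc 2 * k * (2:ℝ) ^ (-(L:ℤ) - 1) * 2 = 2 * k * ((2:ℝ) ^ (-(L:ℤ) - 1) * 2) := by ring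
            _ = 2 * k * (2:ℝ) ^ (-(L:ℤ)) := by rw [e2]
            _ ≤ 2 * (k * pmax) := by
                have hk0 : (0:ℝ) ≤ (k:ℝ) := Nat.cast_nonneg k
                nlinarith [h2L, c_pos L]
  -- assemble
  have main : (∑' l : ℕ, volume (bad l)) ≤
      ENNReal.ofReal ((L:ℝ) * (2 * (k * pmax)) + 2 * (k * pmax)) := by
    calc (∑' l : ℕ, volume (bad l))
        = ∑ l ∈ Finset.range L, volume (bad l) + ∑' l : ℕ, volume (bad (l + L)) :=
          (Summable.sum_add_tsum_nat_add' (k := L) ENNReal.summable).symm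
      _ ≤ ∑ l ∈ Finset.range L, ENNReal.ofReal (2 * (k * pmax)) +
            ENNReal.ofReal (2 * (k * pmax)) :=
          add_le_add (Finset.sum_le_sum fun l _ => bound1 l) tail
      _ = L • ENNReal.ofReal (2 * (k * pmax)) + ENNReal.ofReal (2 * (k * pmax)) := by
          rw [Finset.sum_const, Finset.card_range]
      _ = ENNReal.ofReal ((L:ℝ) * (2 * (k * pmax)) + 2 * (k * pmax)) := by
          rw [nsmul_eq_mul, ← ENNReal.ofReal_natCast L,
            ← ENNReal.ofReal_mul (Nat.cast_nonneg L),
            ← ENNReal.ofReal_add (by positivity) (by positivity)]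
  refine main.trans (ENNReal.ofReal_le_ofReal ?_)
  -- final real arithmetic
  set t : ℝ := -Real.log pmax with ht
  have l2a : (0.6931471803:ℝ) < Real.log 2 := Real.log_two_gt_d9
  have hlog2pos : (0:ℝ) < Real.log 2 := by linarith
  have hts : Real.log 2 ≤ t := by
    rw [ht, le_neg]
    calc Real.log pmax ≤ Real.log (1/2) := Real.log_le_log hpm_pos hpm_half
      _ = -Real.log 2 := by rw [one_div, Real.log_inv]
  have hlogb : Real.logb 2 (1/pmax) = t / Real.log 2 := by
    rw [Real.logb, one_div, Real.log_inv, ht]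
  have hLreal : (L:ℝ) < t / Real.log 2 + 1 := by
    rw [hL, ← hlogb]
    exact Nat.ceil_lt_add_one (by rw [hlogb]; exact div_nonneg (by linarith) hlog2pos.le)
  have hlog4 : Real.log (4/pmax) = 2 * Real.log 2 + t := by
    rw [Real.log_div (by norm_num) hpm_pos.ne', ht,
      show (4:ℝ) = 2^2 by norm_num, Real.log_pow]
    push_cast; ring
  have key : 2 * ((L:ℝ) + 1) ≤ 3 * (2 * Real.log 2 + t) := by
    have h1 : (L:ℝ) + 1 < t / Real.log 2 + 2 := by linarith
    have h2 : t / Real.log 2 * Real.log 2 = t := div_mul_cancel₀ t hlog2pos.ne'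
    nlinarith [mul_pos hlog2pos (lt_of_lt_of_le hlog2pos hts)]
  have hkR : (1:ℝ) ≤ (k:ℝ) := by exact_mod_cast hk
  rw [hlog4]
  nlinarith [mul_le_mul_of_nonneg_right key hkpm, hts, hlog2pos, hpm_pos, hkR,
    mul_nonneg (mul_nonneg (by linarith : (0:ℝ) ≤ 2 * Real.log 2 + t) hkpm)
      (by linarith : (0:ℝ) ≤ (k:ℝ) - 1)]
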